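/- For every b > 0 there exists a unique a(b) ∈ (0, b) such that F(a(b), b) = 0; moreover a(b) < ã := c₂(ρ-(r-g)) and ∂F/∂a(a(b), b) > 0. -/

import Mathlib

open Real Set

noncomputable def F (σ r g ρ c₁ c₂ δ₁ δ₂ a b : ℝ) : ℝ :=
  ((2 - δ₂) * a - c₂ * (1 - δ₂) * (ρ - 2 * (r - g) - σ ^ 2)) * (b / a) ^ (δ₁ - 1)
  + ((δ₁ - 2) * a - c₂ * (δ₁ - 1) * (ρ - 2 * (r - g) - σ ^ 2)) * (b / a) ^ (δ₂ - 1)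
  - (δ₁ - δ₂) * (b - c₁ * (ρ - 2 * (r - g) - σ ^ 2))

set_option maxHeartbeats 1000000 in
/-- for every b > 0 there is a unique a(b) ∈ (0,b) with F(a(b),b) = 0;
moreover a(b) < ã := c₂(ρ-(r-g)) and ∂F/∂a(a(b),b) > 0. -/
theorem stmt_6 (σ r g ρ c₁ c₂ δ₁ δ₂ b : ℝ) (hσ : 0 < σ)
    (hρ : ρ > 2 * (r - g) + σ ^ 2) (hc₂ : 0 < c₂) (hc : c₂ < c₁)
    (hδ₁ : δ₁ > 2) (hδ₂ : δ₂ < 0)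
    (hroot₁ : (1/2) * σ ^ 2 * δ₁ * (δ₁ - 1) + (r - g) * δ₁ - ρ = 0)
    (hroot₂ : (1/2) * σ ^ 2 * δ₂ * (δ₂ - 1) + (r - g) * δ₂ - ρ = 0)
    (hb : 0 < b) :
    ∃ a, a ∈ Ioo 0 b ∧ F σ r g ρ c₁ c₂ δ₁ δ₂ a b = 0 ∧
      (∀ a' ∈ Ioo 0 b, F σ r g ρ c₁ c₂ δ₁ δ₂ a' b = 0 → a' = a) ∧
      a < c₂ * (ρ - (r - g)) ∧
      0 < deriv (fun a' => F σ r g ρ c₁ c₂ δ₁ δ₂ a' b) a := by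
  have hσ2 : (0:ℝ) < σ ^ 2 := by positivity
  -- Vieta-type identities
  have hrg : r - g = σ ^ 2 / 2 * (1 - δ₁ - δ₂) := by
    have h0 : (δ₁ - δ₂) * ((r - g) - σ ^ 2 / 2 * (1 - δ₁ - δ₂)) = 0 := by
      linear_combination hroot₁ - hroot₂
    rcases mul_eq_zero.1 h0 with h | h
    · exfalso; nlinarith
    · linarith
  have hρeq : ρ = -(σ ^ 2 / 2) * (δ₁ * δ₂) := by
    linear_combination -hroot₁ + δ₁ * hrg
  have hKeq : ρ - 2 * (r - g) - σ ^ 2 = σ ^ 2 / 2 * ((δ₁ - 2) * (2 - δ₂)) := by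
    linear_combination hρeq - 2 * hrg
  have htaeq : ρ - (r - g) = σ ^ 2 / 2 * ((δ₁ - 1) * (1 - δ₂)) := by
    linear_combination hρeq - hrg
  have hK : (0:ℝ) < ρ - 2 * (r - g) - σ ^ 2 := by linarith
  have hTpos : (0:ℝ) < c₂ * (ρ - (r - g)) := by
    have : (0:ℝ) < σ ^ 2 / 2 * ((δ₁ - 1) * (1 - δ₂)) := by
      apply mul_pos (by positivity); apply mul_pos <;> linarith
    rw [htaeq]; positivity

  have key : ∀ a : ℝ, 0 < a → HasDerivAt (fun a' => F σ r g ρ c₁ c₂ δ₁ δ₂ a' b)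
      ((((b/a) ^ (δ₁-1) - (b/a) ^ (δ₂-1)) * ((δ₁-2)*(2-δ₂)) * (c₂*(ρ-(r-g)) - a)) / a) a := by
    intro a ha
    have hba : 0 < b / a := div_pos hb ha
    have hd1 : HasDerivAt (fun x : ℝ => b / x) (-(b/a^2)) a := by
      simpa [div_eq_mul_inv, mul_neg] using (hasDerivAt_inv ha.ne').const_mul b
    have hp1 : HasDerivAt (fun x : ℝ => (b/x) ^ (δ₁-1)) (-(b/a^2) * (δ₁-1) * (b/a) ^ (δ₁-1-1)) a :=
      hd1.rpow_const (Or.inl hba.ne')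
    have hp2 : HasDerivAt (fun x : ℝ => (b/x) ^ (δ₂-1)) (-(b/a^2) * (δ₂-1) * (b/a) ^ (δ₂-1-1)) a :=
      hd1.rpow_const (Or.inl hba.ne')
    have hA : HasDerivAt (fun x : ℝ => (2-δ₂)*x - c₂*(1-δ₂)*(ρ - 2 * (r - g) - σ ^ 2)) (2-δ₂) a := by
      simpa using ((hasDerivAt_id a).const_mul (2-δ₂)).sub_const (c₂*(1-δ₂)*(ρ - 2 * (r - g) - σ ^ 2))
    have hB : HasDerivAt (fun x : ℝ => (δ₁-2)*x - c₂*(δ₁-1)*(ρ - 2 * (r - g) - σ ^ 2)) (δ₁-2) a := by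
      simpa using ((hasDerivAt_id a).const_mul (δ₁-2)).sub_const (c₂*(δ₁-1)*(ρ - 2 * (r - g) - σ ^ 2))
    have hcomb := ((hA.mul hp1).add (hB.mul hp2)).sub_const ((δ₁ - δ₂) * (b - c₁ * (ρ - 2 * (r - g) - σ ^ 2)))
    have e1 : (b/a) ^ (δ₁-1-1) = (b/a) ^ (δ₁-1) * (a/b) := by
      rw [rpow_sub hba, rpow_one, div_eq_mul_inv, inv_div]
    have e2 : (b/a) ^ (δ₂-1-1) = (b/a) ^ (δ₂-1) * (a/b) := by
      rw [rpow_sub hba, rpow_one, div_eq_mul_inv, inv_div]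
    simp only [F]
    refine hcomb.congr_deriv ?_
    rw [e1, e2, hKeq, htaeq]
    set X := (b/a) ^ (δ₁-1) with hX
    set Y := (b/a) ^ (δ₂-1) with hY
    field_simp
    ring

  set T := c₂ * (ρ - (r - g)) with hTdef
  set f := fun a' => F σ r g ρ c₁ c₂ δ₁ δ₂ a' b with hf
  have hmpos : 0 < min T b := lt_min hTpos hb
  have hDpos : ∀ x ∈ Ioo (0:ℝ) (min T b), 0 < deriv f x := by
    intro x hx
    rw [(key x hx.1).deriv]
    have hxb : x < b := lt_of_lt_of_le hx.2 (min_le_right _ _)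
    have hxT : x < T := lt_of_lt_of_le hx.2 (min_le_left _ _)
    have h1 : 1 < b / x := (one_lt_div hx.1).mpr hxb
    have hXY : (b/x) ^ (δ₂-1) < (b/x) ^ (δ₁-1) := (rpow_lt_rpow_left_iff h1).mpr (by linarith)
    exact div_pos (mul_pos (mul_pos (sub_pos.2 hXY)
      (mul_pos (by linarith) (by linarith))) (by linarith)) hx.1
  have hmono : StrictMonoOn f (Ioc 0 (min T b)) := by
    apply strictMonoOn_of_deriv_pos (convex_Ioc _ _)
    · intro x hx; exact (key x hx.1).continuousAt.continuousWithinAt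
    · rw [interior_Ioc]; exact hDpos
  have hanti : StrictAntiOn f (Icc T b) := by
    apply strictAntiOn_of_deriv_neg (convex_Icc _ _)
    · intro x hx; exact (key x (lt_of_lt_of_le hTpos hx.1)).continuousAt.continuousWithinAt
    · rw [interior_Icc]; intro x hx
      have hx0 : 0 < x := lt_trans hTpos hx.1
      rw [(key x hx0).deriv]
      have h1 : 1 < b / x := (one_lt_div hx0).mpr hx.2
      have hXY : (b/x) ^ (δ₂-1) < (b/x) ^ (δ₁-1) := (rpow_lt_rpow_left_iff h1).mpr (by linarith)
      apply div_neg_of_neg_of_pos _ hx0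
      exact mul_neg_of_pos_of_neg (mul_pos (sub_pos.2 hXY)
        (mul_pos (by linarith) (by linarith))) (by linarith [hx.1])
  have hfbpos : 0 < f b := by
    have hval : f b = (δ₁ - δ₂) * ((ρ - 2 * (r - g) - σ ^ 2) * (c₁ - c₂)) := by
      simp only [hf, F, div_self hb.ne', one_rpow]; ring
    rw [hval]; exact mul_pos (by linarith) (mul_pos hK (by linarith))
  have hfp : 0 < f (min T b) := by
    rcases le_or_gt b T with h | h
    · rw [min_eq_right h]; exact hfbpos
    · rw [min_eq_left h.le]
      have := hanti ⟨le_refl T, h.le⟩ ⟨h.le, le_refl b⟩ h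
      linarith
  -- tendsto -infinity as a -> 0+
  have t0 : Filter.Tendsto (fun a : ℝ => b / a) (nhdsWithin 0 (Ioi 0)) Filter.atTop := by
    simpa [div_eq_mul_inv] using tendsto_inv_nhdsGT_zero.const_mul_atTop hb
  have t1 : Filter.Tendsto (fun a : ℝ => (b/a) ^ (δ₁-1)) (nhdsWithin 0 (Ioi 0)) Filter.atTop :=
    (tendsto_rpow_atTop (by linarith : (0:ℝ) < δ₁ - 1)).comp t0
  have t2 : Filter.Tendsto (fun a : ℝ => (b/a) ^ (δ₂-1)) (nhdsWithin 0 (Ioi 0)) (nhds 0) := by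
    have he : δ₂ - 1 = -(1 - δ₂) := by ring
    rw [he]
    exact (tendsto_rpow_neg_atTop (by linarith : (0:ℝ) < 1 - δ₂)).comp t0
  have cA : Continuous (fun a : ℝ => (2-δ₂)*a - c₂*(1-δ₂)*(ρ - 2*(r-g) - σ^2)) := ((continuous_const.mul continuous_id).sub continuous_const)
  have cB : Continuous (fun a : ℝ => (δ₁-2)*a - c₂*(δ₁-1)*(ρ - 2*(r-g) - σ^2)) := ((continuous_const.mul continuous_id).sub continuous_const)
  have tA : Filter.Tendsto (fun a : ℝ => (2-δ₂)*a - c₂*(1-δ₂)*(ρ - 2*(r-g) - σ^2))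
      (nhdsWithin 0 (Ioi 0)) (nhds ((2-δ₂)*0 - c₂*(1-δ₂)*(ρ - 2*(r-g) - σ^2))) :=
    (cA.tendsto 0).mono_left nhdsWithin_le_nhds
  have tB : Filter.Tendsto (fun a : ℝ => (δ₁-2)*a - c₂*(δ₁-1)*(ρ - 2*(r-g) - σ^2))
      (nhdsWithin 0 (Ioi 0)) (nhds ((δ₁-2)*0 - c₂*(δ₁-1)*(ρ - 2*(r-g) - σ^2))) :=
    (cB.tendsto 0).mono_left nhdsWithin_le_nhds
  have tterm1 : Filter.Tendsto
      (fun a : ℝ => ((2-δ₂)*a - c₂*(1-δ₂)*(ρ - 2*(r-g) - σ^2)) * (b/a) ^ (δ₁-1))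
      (nhdsWithin 0 (Ioi 0)) Filter.atBot := by
    apply Filter.Tendsto.neg_mul_atTop _ tA t1
    have : 0 < c₂*(1-δ₂)*(ρ - 2*(r-g) - σ^2) :=
      mul_pos (mul_pos hc₂ (by linarith)) hK
    linarith
  have hbot : Filter.Tendsto f (nhdsWithin 0 (Ioi 0)) Filter.atBot := by
    have hmain := tterm1.atBot_add ((tB.mul t2).sub_const
      ((δ₁ - δ₂) * (b - c₁ * (ρ - 2 * (r - g) - σ ^ 2))))
    refine hmain.congr fun a => ?_
    simp only [hf, F]; ring
  have hq : ∃ q ∈ Ioo (0:ℝ) (min T b), f q < 0 := by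
    have h1 : ∀ᶠ a in nhdsWithin 0 (Ioi 0), f a < 0 :=
      hbot.eventually (Filter.eventually_lt_atBot 0)
    have h2 : ∀ᶠ a in nhdsWithin (0:ℝ) (Ioi 0), a ∈ Ioo (0:ℝ) (min T b) :=
      Ioo_mem_nhdsGT_of_mem ⟨le_refl _, hmpos⟩
    rcases (h1.and h2).exists with ⟨q, hq1, hq2⟩
    exact ⟨q, hq2, hq1⟩
  obtain ⟨q, hqmem, hqneg⟩ := hq
  have hcont : ContinuousOn f (Icc q (min T b)) := fun x hx =>
    (key x (lt_of_lt_of_le hqmem.1 hx.1)).continuousAt.continuousWithinAt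
  have h0mem : (0:ℝ) ∈ Ioo (f q) (f (min T b)) := ⟨hqneg, hfp⟩
  obtain ⟨a, hamem, hfa⟩ := intermediate_value_Ioo hqmem.2.le hcont h0mem
  have ha0 : 0 < a := lt_trans hqmem.1 hamem.1
  have haT : a < T := lt_of_lt_of_le hamem.2 (min_le_left _ _)
  have hab : a < b := lt_of_lt_of_le hamem.2 (min_le_right _ _)
  refine ⟨a, ⟨ha0, hab⟩, hfa, ?_, haT, hDpos a ⟨ha0, hamem.2⟩⟩
  intro a' ha' hfa'
  have ha'le : a' ≤ min T b := by
    by_contra h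
    push_neg at h
    have hTb : T < b := by
      rcases lt_or_ge T b with h' | h'
      · exact h'
      · rw [min_eq_right h'] at h; exact absurd ha'.2 (not_lt.2 h.le)
    rw [min_eq_left hTb.le] at h
    have hlt : f b < f a' := hanti ⟨h.le, ha'.2.le⟩ ⟨hTb.le, le_refl b⟩ ha'.2
    have : f a' = 0 := hfa'
    linarith
  exact hmono.injOn ⟨ha'.1, ha'le⟩ ⟨ha0, hamem.2.le⟩ (by exact hfa'.trans hfa.symm)
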